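/- Let (n_j) be defined by n_0 = 0 and n_{j+1} = n_j + j², so n_j = ∑_{i<j} i². For any sequences X, Y : ℕ → Bool, if δ_i denotes the fraction of positions in [n_i, n_{i+1}) where X and Y differ, then limsup_{n→∞} (card {k<n : X k ≠ Y k})/n = limsup_{j→∞} (1/n_j)·∑_{i<j} δ_i·i². -/

import Mathlib

open Filter Finset

/-- `nseq j = ∑_{i<j} i²`, the chunk boundaries. -/
def nseq (j : ℕ) : ℕ := ∑ i ∈ Finset.range j, i ^ 2

lemma nseq_succ (j : ℕ) : nseq (j+1) = nseq j + j^2 := Finset.sum_range_succ _ _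

lemma nseq_mono : Monotone nseq :=
  monotone_nat_of_le_succ fun j => by simp [nseq_succ]

lemma nseq_succ_lb (j : ℕ) : j^2 ≤ nseq (j+1) := by
  rw [nseq_succ]; omega

lemma nseq_one : nseq 1 = 0 := by simp [nseq]

lemma nseq_formula (j : ℕ) : 6 * nseq (j+1) = j * (j+1) * (2*j+1) := by
  induction j with
  | zero => simp [nseq]
  | succ m ih =>
      rw [nseq_succ, Nat.mul_add, ih]
      ring

lemma nseq_pos {j : ℕ} (hj : 2 ≤ j) : 0 < nseq j := by
  have h1 : nseq 2 ≤ nseq j := nseq_mono hj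
  have h2 : nseq 2 = 1 := by simp [nseq, Finset.sum_range_succ]
  omega

lemma nseq_cube_le {j : ℕ} (hj : 2 ≤ j) : j^3 ≤ 24 * nseq j := by
  obtain ⟨m, rfl⟩ : ∃ m, j = m + 1 := ⟨j - 1, by omega⟩
  have hm : 1 ≤ m := by omega
  have h := nseq_formula m
  nlinarith [h, hm]

lemma tendsto_nseq : Tendsto nseq atTop atTop := by
  apply tendsto_atTop_atTop_of_monotone nseq_mono
  intro b
  exact ⟨b + 3, le_trans (by nlinarith) (nseq_succ_lb (b+2))⟩

lemma e_tendsto : Tendsto (fun j : ℕ => (j : ℝ)^2 / (nseq j : ℝ)) atTop (nhds 0) := by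
  apply squeeze_zero' (g := fun j : ℕ => 24 / (j : ℝ))
  · filter_upwards [eventually_ge_atTop 2] with j hj
    positivity
  · filter_upwards [eventually_ge_atTop 2] with j hj
    have h1 : (0:ℝ) < nseq j := by exact_mod_cast nseq_pos hj
    have h2 : (0:ℝ) < (j:ℝ) := by positivity
    rw [div_le_div_iff₀ h1 h2]
    have h3 : j^3 ≤ 24 * nseq j := nseq_cube_le hj
    have h4 : (j:ℝ)^3 ≤ 24 * (nseq j : ℝ) := by exact_mod_cast h3
    nlinarith
  · exact tendsto_const_div_atTop_nhds_zero_nat 24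

lemma Dsplit (X Y : ℕ → Bool) {a b : ℕ} (hab : a ≤ b) :
    ((Finset.range b).filter (fun k => X k ≠ Y k)).card =
      ((Finset.range a).filter (fun k => X k ≠ Y k)).card +
      ((Finset.Ico a b).filter (fun k => X k ≠ Y k)).card := by
  rw [Finset.range_eq_Ico, Finset.range_eq_Ico]
  rw [← Finset.Ico_union_Ico_eq_Ico (Nat.zero_le a) hab, Finset.filter_union,
    Finset.card_union_of_disjoint]
  exact Finset.disjoint_filter_filter (p := fun k => X k ≠ Y k) (q := fun k => X k ≠ Y k)
    (Finset.Ico_disjoint_Ico_consecutive 0 a b)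

lemma sum_c (X Y : ℕ → Bool) (j : ℕ) :
    ∑ i ∈ Finset.range j, ((Finset.Ico (nseq i) (nseq (i+1))).filter (fun k => X k ≠ Y k)).card
      = ((Finset.range (nseq j)).filter (fun k => X k ≠ Y k)).card := by
  induction j with
  | zero => simp [nseq]
  | succ m ih =>
      rw [Finset.sum_range_succ, ih, Dsplit X Y (a := nseq m) (b := nseq (m+1))]
      rw [nseq_succ]; omega

theorem stmt10 (X Y : ℕ → Bool) :
    Filter.limsup
        (fun n => (((Finset.range n).filter (fun k => X k ≠ Y k)).card : ℝ) / n) Filter.atTop =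
      Filter.limsup
        (fun j => (1 / (nseq j : ℝ)) *
          ∑ i ∈ Finset.range j,
            ((((Finset.Ico (nseq i) (nseq (i + 1))).filter (fun k => X k ≠ Y k)).card : ℝ)
                / (i : ℝ) ^ 2) * (i : ℝ) ^ 2)
        Filter.atTop := by
  classical
  set D : ℕ → ℕ := fun n => ((Finset.range n).filter (fun k => X k ≠ Y k)).card with hD
  set f : ℕ → ℝ := fun n => (D n : ℝ) / n with hf
  set F : ℕ → ℝ := fun j => (D (nseq j) : ℝ) / (nseq j : ℝ) with hF
  have hDle : ∀ n, D n ≤ n := fun n =>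
    le_trans (Finset.card_filter_le _ _) (by simp)
  -- rewrite the RHS sequence as F
  have hg : (fun j => (1 / (nseq j : ℝ)) *
          ∑ i ∈ Finset.range j,
            ((((Finset.Ico (nseq i) (nseq (i + 1))).filter (fun k => X k ≠ Y k)).card : ℝ)
                / (i : ℝ) ^ 2) * (i : ℝ) ^ 2) = F := by
    funext j
    have hsum : (∑ i ∈ Finset.range j,
        ((((Finset.Ico (nseq i) (nseq (i + 1))).filter (fun k => X k ≠ Y k)).card : ℝ)
            / (i : ℝ) ^ 2) * (i : ℝ) ^ 2) = (D (nseq j) : ℝ) := by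
      simp only [hD]
      rw [← sum_c X Y j]
      push_cast
      apply Finset.sum_congr rfl
      intro i _
      rcases Nat.eq_zero_or_pos i with h0 | hpos
      · subst h0
        simp [nseq_one, nseq]
      · rw [div_mul_cancel₀]
        have : (i:ℝ) ≠ 0 := by positivity
        positivity
    rw [hsum, hF, one_div_mul_eq_div]
  rw [hg]
  -- boundedness facts
  have hf0 : ∀ n, 0 ≤ f n := fun n => by rw [hf]; positivity
  have hf1 : ∀ n, f n ≤ 1 := by
    intro n
    rcases Nat.eq_zero_or_pos n with h0 | hpos
    · subst h0; simp [hf]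
    · rw [hf]
      rw [div_le_one (by exact_mod_cast hpos)]
      exact_mod_cast hDle n
  have hFf : ∀ j, F j = f (nseq j) := fun j => rfl
  have hfb : IsBoundedUnder (· ≤ ·) atTop f := isBoundedUnder_of ⟨1, fun n => hf1 n⟩
  have hfc : IsCoboundedUnder (· ≤ ·) atTop f :=
    (isBoundedUnder_of ⟨0, fun n => hf0 n⟩ : IsBoundedUnder (· ≥ ·) atTop f).isCoboundedUnder_le
  have hFb : IsBoundedUnder (· ≤ ·) atTop F :=
    isBoundedUnder_of ⟨1, fun j => by rw [hFf]; exact hf1 _⟩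
  have hFc : IsCoboundedUnder (· ≤ ·) atTop F :=
    (isBoundedUnder_of ⟨0, fun j => by rw [hFf]; exact hf0 _⟩ :
      IsBoundedUnder (· ≥ ·) atTop F).isCoboundedUnder_le
  apply le_antisymm
  · -- limsup f ≤ limsup F
    apply le_of_forall_pos_le_add
    intro ε hε
    have hFev : ∀ᶠ j in atTop, F j < limsup F atTop + ε/2 :=
      eventually_lt_of_limsup_lt (lt_add_of_pos_right _ (half_pos hε)) hFb
    have heev : ∀ᶠ j : ℕ in atTop, (j:ℝ)^2/(nseq j : ℝ) < ε/2 :=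
      e_tendsto.eventually_lt_const (half_pos hε)
    rw [eventually_atTop] at hFev heev
    obtain ⟨J1, hJ1⟩ := hFev
    obtain ⟨J2, hJ2⟩ := heev
    set J : ℕ := max (max J1 J2) 2 with hJdef
    apply limsup_le_of_le hfc
    filter_upwards [eventually_ge_atTop (nseq J)] with n hn
    set j := Nat.findGreatest (fun i => nseq i ≤ n) (n+3) with hjdef
    have hj1 : nseq j ≤ n := by
      rw [hjdef]
      exact Nat.findGreatest_spec (P := fun i => nseq i ≤ n) (m := 0) (Nat.zero_le _)
        (by simp [nseq])
    have hjlt : j < n + 3 := by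
      by_contra h
      have hje : j = n+3 := le_antisymm (Nat.findGreatest_le _) (by omega)
      have h1 : nseq (n+3) ≤ n := hje ▸ hj1
      have h2 := nseq_succ_lb (n+2)
      nlinarith
    have hj2 : n < nseq (j+1) := by
      have h : ¬ nseq (j+1) ≤ n := by
        simpa using Nat.findGreatest_is_greatest (P := fun i => nseq i ≤ n)
          (Nat.lt_succ_self j) (by omega : j + 1 ≤ n + 3)
      omega
    clear_value j
    clear hjdef
    have hjJ : J ≤ j := by
      by_contra h
      push_neg at h
      have : nseq (j+1) ≤ nseq J := nseq_mono (by omega)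
      omega
    have hj2' : 2 ≤ j := le_trans (le_max_right _ _) hjJ
    have hnpos : 0 < nseq j := nseq_pos hj2'
    have hnpos' : 0 < n := lt_of_lt_of_le hnpos hj1
    have hDn : D n ≤ D (nseq j) + j^2 := by
      have h1 := Dsplit X Y hj1
      have h2 : ((Finset.Ico (nseq j) n).filter (fun k => X k ≠ Y k)).card ≤ n - nseq j :=
        le_trans (Finset.card_filter_le _ _) (by simp)
      have h3 : n < nseq j + j^2 := by rw [← nseq_succ]; exact hj2
      simp only [hD]
      omega
    have hnnR : (nseq j : ℝ) ≤ (n:ℝ) := by exact_mod_cast hj1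
    have hnR : (0:ℝ) < (n:ℝ) := by exact_mod_cast hnpos'
    have hnseqR : (0:ℝ) < (nseq j : ℝ) := by exact_mod_cast hnpos
    have key : f n ≤ F j + (j:ℝ)^2/(nseq j : ℝ) := by
      have step1 : f n ≤ ((D (nseq j) : ℝ) + (j:ℝ)^2)/(n:ℝ) := by
        show (D n : ℝ) / (n:ℝ) ≤ _
        apply div_le_div_of_nonneg_right ?_ hnR.le
        case _ => exact_mod_cast hDn
      have step2 : ((D (nseq j) : ℝ) + (j:ℝ)^2)/(n:ℝ)
          ≤ ((D (nseq j) : ℝ) + (j:ℝ)^2)/(nseq j : ℝ) :=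
        div_le_div_of_nonneg_left (by positivity) hnseqR hnnR
      calc f n ≤ ((D (nseq j) : ℝ) + (j:ℝ)^2)/(n:ℝ) := step1
        _ ≤ ((D (nseq j) : ℝ) + (j:ℝ)^2)/(nseq j : ℝ) := step2
        _ = F j + (j:ℝ)^2/(nseq j : ℝ) := by simp only [hF]; rw [add_div]
    have hb1 := hJ1 j (le_trans (le_trans (le_max_left _ _) (le_max_left _ _)) hjJ)
    have hb2 := hJ2 j (le_trans (le_trans (le_max_right _ _) (le_max_left _ _)) hjJ)
    linarith
  · -- limsup F ≤ limsup f
    apply le_of_forall_pos_le_add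
    intro ε hε
    apply limsup_le_of_le hFc
    have hev : ∀ᶠ n in atTop, f n < limsup f atTop + ε :=
      eventually_lt_of_limsup_lt (lt_add_of_pos_right _ hε) hfb
    filter_upwards [tendsto_nseq.eventually hev] with j hj
    rw [hFf]
    exact le_of_lt hj
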